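/- arXiv:2108.11816 — 2 statements merged into one kernel-verified Lean document; each statement's English description precedes it below -/
import Mathlib

section
/- For every multigraph G, every valid pair of functions (g,h), and every integer k ≥ 1, we have χ'_{(g,h)}(G) ≤ k if and only if G is (k·g, k·h)-orientable. -/
open Classical

noncomputable section

namespace MG

variable {V : Type} {E : Type} [Fintype V] [Fintype E] [DecidableEq V]

/-- The number of times vertex `v` occurs as an endpoint of the unordered pair `s`
(so a loop at `v` counts twice). -/
def mult (v : V) (s : Sym2 V) : ℕ :=
  Sym2.lift ⟨fun a b => (if a = v then 1 else 0) + (if b = v then 1 else 0),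
    fun _ _ => add_comm _ _⟩ s

/-- The degree of a vertex in the multigraph whose edges `E` have endpoints given
by `ends` (loops count twice). -/
def degree (ends : E → Sym2 V) (v : V) : ℕ := ∑ e : E, mult v (ends e)

/-- Maximum degree `Δ(G)`. -/
def maxDegree (ends : E → Sym2 V) : ℕ := Finset.univ.sup fun v => degree ends v

/-- `e(S)`: the number of edges with all endpoints in `S`. -/
def edgesWithin (ends : E → Sym2 V) (S : Finset V) : ℕ :=
  (Finset.univ.filter fun e => ∀ v ∈ ends e, v ∈ S).card

/-- The degree of `v` in the subgraph induced by `S`. -/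
def degreeIn (ends : E → Sym2 V) (S : Finset V) (v : V) : ℕ :=
  ∑ e ∈ Finset.univ.filter (fun e => ∀ u ∈ ends e, u ∈ S), mult v (ends e)

/-- Adjacency; a vertex with a loop is adjacent to itself. -/
def Adj (ends : E → Sym2 V) (u v : V) : Prop := ∃ e, ends e = s(u, v)

/-- The multigraph has no loops. -/
def Loopless (ends : E → Sym2 V) : Prop := ∀ e, ¬ (ends e).IsDiag

/-- Reachability by walks. -/
def Reaches (ends : E → Sym2 V) (u v : V) : Prop :=
  Relation.ReflTransGen (Adj ends) u v

/-- The connected component of `v`, as a set of vertices. -/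
def component (ends : E → Sym2 V) (v : V) : Finset V :=
  Finset.univ.filter fun u => Reaches ends v u

/-- A pseudoforest: every connected component contains at most one cycle
(a loop counts as a cycle); equivalently, every connected component has at
most as many edges as vertices. -/
def IsPseudoforest (ends : E → Sym2 V) : Prop :=
  ∀ v : V, edgesWithin ends (component ends v) ≤ (component ends v).card

/-- A forest (acyclic multigraph): every connected component has strictly fewer
edges than vertices. -/
def IsForest (ends : E → Sym2 V) : Prop :=
  ∀ v : V, edgesWithin ends (component ends v) + 1 ≤ (component ends v).card

/-- An orientation assigns to each edge an ordered pair of its endpoints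
(tail, head). -/
def IsOrientation (ends : E → Sym2 V) (D : E → V × V) : Prop :=
  ∀ e, Sym2.mk (D e).1 (D e).2 = ends e

/-- Indegree of `v` under the orientation `D`. -/
def inDeg (D : E → V × V) (v : V) : ℕ := (Finset.univ.filter fun e => (D e).2 = v).card

/-- Outdegree of `v` under the orientation `D`. -/
def outDeg (D : E → V × V) (v : V) : ℕ := (Finset.univ.filter fun e => (D e).1 = v).card

/-- `G` is `(g,h)`-orientable: there is an orientation in which every vertex `v`
has indegree at most `g v` and outdegree at most `h v`. -/
def GHOrientable (ends : E → Sym2 V) (g h : V → ℕ∞) : Prop :=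
  ∃ D : E → V × V, IsOrientation ends D ∧
    (∀ v, (inDeg D v : ℕ∞) ≤ g v) ∧ (∀ v, (outDeg D v : ℕ∞) ≤ h v)

/-- `(g,h)` is a valid pair of functions for `G`. -/
def ValidPair (ends : E → Sym2 V) (g h : V → ℕ∞) : Prop :=
  (∀ v : V, 1 ≤ g v + h v) ∧
  (∀ u v : V, Adj ends u v → 1 ≤ g u + g v) ∧
  (∀ u v : V, Adj ends u v → 1 ≤ h u + h v)

/-- The endpoint map of the subgraph consisting of the edges satisfying `P`. -/
def subEnds (ends : E → Sym2 V) (P : E → Prop) : {e // P e} → Sym2 V :=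
  fun e => ends e.val

/-- A `(g,h)`-oriented-coloring: each color class is a `(g,h)`-orientable subgraph. -/
def GHColoring (ends : E → Sym2 V) (g h : V → ℕ∞) {k : ℕ} (C : E → Fin k) : Prop :=
  ∀ c : Fin k, GHOrientable (subEnds ends fun e => C e = c) g h

/-- The `(g,h)`-oriented chromatic index `χ'_{(g,h)}(G)`. -/
def ghChromaticIndex (ends : E → Sym2 V) (g h : V → ℕ∞) : ℕ :=
  sInf {k | ∃ C : E → Fin k, GHColoring ends g h C}

/-- Ceiling division `⌈a/b⌉` on ℕ. -/
def cdiv (a b : ℕ) : ℕ := (a + b - 1) / b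

/-- Replace `∞` values of `g` by the maximum degree `Δ(G)`. -/
def trunc (ends : E → Sym2 V) (g : V → ℕ∞) (v : V) : ℕ :=
  WithTop.untopD (maxDegree ends) (g v)

/-- The weighted maximum degree `Δ_{(g,h)}(G) = max_v ⌈d(v)/(g(v)+h(v))⌉`
(values `∞` of `g, h` replaced by `Δ(G)`). -/
def ghMaxDegree (ends : E → Sym2 V) (g h : V → ℕ∞) : ℕ :=
  Finset.univ.sup fun v => cdiv (degree ends v) (trunc ends g v + trunc ends h v)

/-- The weighted maximum density
`W_{(g,h)}(G) = max_{S, g(S) ≥ 1, h(S) ≥ 1} ⌈e(S)/min{g(S),h(S)}⌉`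
(values `∞` of `g, h` replaced by `Δ(G)`). -/
def ghMaxDensity (ends : E → Sym2 V) (g h : V → ℕ∞) : ℕ :=
  (Finset.univ.filter fun S : Finset V =>
      (1 ≤ ∑ v ∈ S, g v) ∧ (1 ≤ ∑ v ∈ S, h v)).sup
    fun S => cdiv (edgesWithin ends S)
      (min (∑ v ∈ S, trunc ends g v) (∑ v ∈ S, trunc ends h v))

/-- An edge-coloring into pseudoforests. -/
def PaColoring (ends : E → Sym2 V) {k : ℕ} (C : E → Fin k) : Prop :=
  ∀ c : Fin k, IsPseudoforest (subEnds ends fun e => C e = c)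

/-- The pseudoarboricity `pa(G)`. -/
def pa (ends : E → Sym2 V) : ℕ := sInf {k | ∃ C : E → Fin k, PaColoring ends C}

/-- An edge-coloring into degree-`f` pseudoforests. -/
def PafColoring (ends : E → Sym2 V) (f : V → ℕ) {k : ℕ} (C : E → Fin k) : Prop :=
  ∀ c : Fin k, IsPseudoforest (subEnds ends fun e => C e = c) ∧
    ∀ v, degree (subEnds ends fun e => C e = c) v ≤ f v

/-- The degree-`f` pseudoarboricity `pa_f(G)`. -/
def paf (ends : E → Sym2 V) (f : V → ℕ) : ℕ :=
  sInf {k | ∃ C : E → Fin k, PafColoring ends f C}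

/-- The weighted maximum degree `Δ_f(G) = max_v ⌈d(v)/f(v)⌉`. -/
def fMaxDegree (ends : E → Sym2 V) (f : V → ℕ) : ℕ :=
  Finset.univ.sup fun v => cdiv (degree ends v) (f v)

/-- An edge-coloring into degree-`f` forests. -/
def AfColoring (ends : E → Sym2 V) (f : V → ℕ) {k : ℕ} (C : E → Fin k) : Prop :=
  ∀ c : Fin k, IsForest (subEnds ends fun e => C e = c) ∧
    ∀ v, degree (subEnds ends fun e => C e = c) v ≤ f v

/-- The degree-`f` arboricity `a_f(G)`. -/
def af (ends : E → Sym2 V) (f : V → ℕ) : ℕ :=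
  sInf {k | ∃ C : E → Fin k, AfColoring ends f C}

/-- The arboricity `a(G)`. -/
def arboricity (ends : E → Sym2 V) : ℕ :=
  sInf {k | ∃ C : E → Fin k, ∀ c : Fin k, IsForest (subEnds ends fun e => C e = c)}

/-- The linear arboricity `la(G)`: color classes are linear forests, i.e.
degree-2 forests. -/
def la (ends : E → Sym2 V) : ℕ := af ends fun _ => 2

/-- `G` is `k`-degenerate: every (induced, nonempty) subgraph has a vertex of
degree at most `k`. -/
def Degenerate (ends : E → Sym2 V) (k : ℕ) : Prop :=
  ∀ S : Finset V, S.Nonempty → ∃ v ∈ S, degreeIn ends S v ≤ k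

/-- An `f`-coloring: in each color class every vertex `v` has degree at most `f v`. -/
def FColoring (ends : E → Sym2 V) (f : V → ℕ) {k : ℕ} (C : E → Fin k) : Prop :=
  ∀ c : Fin k, ∀ v, degree (subEnds ends fun e => C e = c) v ≤ f v

/-- The `f`-chromatic index `χ'_f(G)`. -/
def fChromaticIndex (ends : E → Sym2 V) (f : V → ℕ) : ℕ :=
  sInf {k | ∃ C : E → Fin k, FColoring ends f C}

/-- `G` is bipartite: the vertices can be split into two sides so that every
edge has one endpoint on each side. -/
def Bipartite (ends : E → Sym2 V) : Prop :=
  ∃ P : V → Prop, ∀ e : E, ∃ u v, ends e = s(u, v) ∧ P u ∧ ¬ P v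

/-- The list analogue `χ'_{(g,h),ℓ}(G)`: the least `k` such that every list
assignment with lists of size at least `k` admits a coloring from the lists in
which each color class is `(g,h)`-orientable. -/
def ghListChromaticIndex (ends : E → Sym2 V) (g h : V → ℕ∞) : ℕ :=
  sInf {k | ∀ L : E → Finset ℕ, (∀ e, k ≤ (L e).card) →
    ∃ C : E → ℕ, (∀ e, C e ∈ L e) ∧
      ∀ c : ℕ, GHOrientable (subEnds ends fun e => C e = c) g h}

/-- The list degree-`f` pseudoarboricity `pa_{f,ℓ}(G)`. -/
def pafList (ends : E → Sym2 V) (f : V → ℕ) : ℕ :=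
  sInf {k | ∀ L : E → Finset ℕ, (∀ e, k ≤ (L e).card) →
    ∃ C : E → ℕ, (∀ e, C e ∈ L e) ∧
      ∀ c : ℕ, IsPseudoforest (subEnds ends fun e => C e = c) ∧
        ∀ v, degree (subEnds ends fun e => C e = c) v ≤ f v}

/-- The list `f`-chromatic index `χ'_{f,ℓ}(G)`. -/
def fListChromaticIndex (ends : E → Sym2 V) (f : V → ℕ) : ℕ :=
  sInf {k | ∀ L : E → Finset ℕ, (∀ e, k ≤ (L e).card) →
    ∃ C : E → ℕ, (∀ e, C e ∈ L e) ∧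
      ∀ c : ℕ, ∀ v, degree (subEnds ends fun e => C e = c) v ≤ f v}



end MG
set_option linter.unusedSectionVars false
open Finset

-- helper1
lemma filter_subtype_card {E : Type} [Fintype E] (p : E → Prop) (q : {x // p x} → Prop)
    [DecidablePred p] [DecidablePred q] [DecidablePred fun e => ∃ hp : p e, q ⟨e, hp⟩] :
    (Finset.univ.filter fun e' : {x // p x} => q e').card
      = (Finset.univ.filter fun e => ∃ hp : p e, q ⟨e, hp⟩).card := by
  apply Finset.card_bij (fun e' _ => e'.val)
  · rintro ⟨e, hp⟩ h
    simp only [mem_filter, mem_univ, true_and] at h ⊢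
    exact ⟨hp, h⟩
  · rintro ⟨e, hp⟩ h ⟨e2, hp2⟩ h2 hee
    exact Subtype.ext hee
  · intro e he
    simp only [mem_filter, mem_univ, true_and] at he
    obtain ⟨hp, hq⟩ := he
    exact ⟨⟨e, hp⟩, by simpa using hq, rfl⟩

variable {E : Type} [Fintype E] [DecidableEq E]

noncomputable def rk (s : Finset E) (e : E) : ℕ :=
  (s.filter fun e' => (Fintype.equivFin E) e' < (Fintype.equivFin E) e).card

lemma rk_lt {s : Finset E} {e : E} (he : e ∈ s) : rk s e < s.card := by
  apply Finset.card_lt_card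
  constructor
  · exact Finset.filter_subset _ _
  · intro hsub
    have := hsub he
    simp at this

lemma rk_injOn {s : Finset E} {e e' : E} (he : e ∈ s) (he' : e' ∈ s)
    (h : rk s e = rk s e') : e = e' := by
  by_contra hne
  have key : ∀ a b : E, a ∈ s → b ∈ s → (Fintype.equivFin E) a < (Fintype.equivFin E) b →
      rk s a < rk s b := by
    intro a b ha hb hab
    apply Finset.card_lt_card
    constructor
    · intro x hx
      simp only [mem_filter] at hx ⊢
      exact ⟨hx.1, hx.2.trans hab⟩
    · intro hsub
      have : a ∈ s.filter fun e' => (Fintype.equivFin E) e' < (Fintype.equivFin E) b := by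
        simp [ha, hab]
      have := hsub this
      simp at this
  rcases lt_trichotomy ((Fintype.equivFin E) e) ((Fintype.equivFin E) e') with hlt | heq | hgt
  · exact absurd h (key e e' he he' hlt).ne
  · exact hne ((Fintype.equivFin E).injective heq)
  · exact absurd h.symm (key e' e he' he hgt).ne

lemma A0 : ∀ (k : ℕ) {E W : Type} [Fintype E] [Fintype W] [DecidableEq E] [DecidableEq W]
    (t h : E → W),
    (∀ w, (Finset.univ.filter fun e => t e = w).card = k) →
    (∀ w, (Finset.univ.filter fun e => h e = w).card = k) →
    ∃ C : E → Fin k, ∀ e e', C e = C e' → (t e = t e' ∨ h e = h e') → e = e' := by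
  intro k
  induction k with
  | zero =>
    intro E W _ _ _ _ t h ht hh
    have : IsEmpty E := by
      constructor
      intro e
      have := ht (t e)
      have he : e ∈ Finset.univ.filter fun e' => t e' = t e := by simp
      rw [Finset.card_eq_zero] at this
      rw [this] at he
      exact absurd he (Finset.notMem_empty e)
    exact ⟨fun e => isEmptyElim e, fun e => isEmptyElim e⟩
  | succ k ih =>
    intro E W _ _ _ _ t h ht hh
    -- Hall condition
    set s : W → Finset W := fun w => (Finset.univ.filter fun e => t e = w).image h with hs
    have hall : ∀ T : Finset W, T.card ≤ (T.biUnion s).card := by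
      intro T
      have hcount : ∀ (f : E → W) (hf : ∀ w, (Finset.univ.filter fun e => f e = w).card = k + 1)
          (S : Finset W), (Finset.univ.filter fun e => f e ∈ S).card = (k+1) * S.card := by
        intro f hf S
        rw [Finset.card_eq_sum_card_fiberwise (f := f) (s := Finset.univ.filter fun e => f e ∈ S) (t := S)
          (fun e he => (Finset.mem_filter.mp he).2)]
        rw [Finset.sum_congr rfl (fun w hw => ?_), Finset.sum_const, smul_eq_mul, mul_comm]
        rw [Finset.filter_filter]
        rw [← hf w]
        congr 1
        apply Finset.filter_congr
        intro e _
        constructor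
        · exact fun hx => hx.2
        · intro hx; exact ⟨hx ▸ hw, hx⟩
      have hsub : (Finset.univ.filter fun e => t e ∈ T)
          ⊆ (Finset.univ.filter fun e => h e ∈ T.biUnion s) := by
        intro e he
        simp only [Finset.mem_filter, Finset.mem_univ, true_and] at he ⊢
        rw [Finset.mem_biUnion]
        exact ⟨t e, he, by rw [hs]; simp only [Finset.mem_image]; exact ⟨e, by simp, rfl⟩⟩
      have h1 := hcount t ht T
      have h2 := hcount h hh (T.biUnion s)
      have := Finset.card_le_card hsub
      rw [h1, h2] at this
      exact Nat.le_of_mul_le_mul_left this (Nat.succ_pos k)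
    obtain ⟨f, finj, hf⟩ := (Finset.all_card_le_biUnion_card_iff_exists_injective s).mp hall
    have fbij : Function.Bijective f := (Finite.injective_iff_bijective).mp finj
    -- choose matching edges
    have hsel : ∀ w, ∃ e, t e = w ∧ h e = f w := by
      intro w
      have := hf w
      rw [hs] at this
      simp only [Finset.mem_image, Finset.mem_filter, Finset.mem_univ, true_and] at this
      obtain ⟨e, he1, he2⟩ := this
      exact ⟨e, he1, he2⟩
    choose sel hsel1 hsel2 using hsel
    have selinj : Function.Injective sel := by
      intro a b hab
      rw [← hsel1 a, ← hsel1 b, hab]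
    set img : Finset E := Finset.univ.image sel with himg
    -- the reduced graph
    have fiber_inter_t : ∀ w, (Finset.univ.filter fun e => t e = w) ∩ img = {sel w} := by
      intro w
      ext e
      simp only [Finset.mem_inter, Finset.mem_filter, Finset.mem_univ, true_and, himg,
        Finset.mem_image, Finset.mem_singleton]
      constructor
      · rintro ⟨hte, w', rfl⟩
        rw [hsel1 w'] at hte
        rw [hte]
      · rintro rfl
        exact ⟨hsel1 w, w, rfl⟩
    have fiber_inter_h : ∀ w, (Finset.univ.filter fun e => h e = w) ∩ img
        = {sel (Function.surjInv fbij.2 w)} := by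
      intro w
      have hfw : f (Function.surjInv fbij.2 w) = w := Function.surjInv_eq fbij.2 w
      ext e
      simp only [Finset.mem_inter, Finset.mem_filter, Finset.mem_univ, true_and, himg,
        Finset.mem_image, Finset.mem_singleton]
      constructor
      · rintro ⟨hte, w', rfl⟩
        rw [hsel2 w'] at hte
        have : w' = Function.surjInv fbij.2 w := finj (by rw [hte, hfw])
        rw [this]
      · rintro rfl
        exact ⟨by rw [hsel2, hfw], _, rfl⟩
    have card_red : ∀ (q : E → W) (w : W),
        ((Finset.univ.filter fun e => q e = w) ∩ img).card = 1 →
        (Finset.univ.filter fun e => q e = w).card = k + 1 →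
        (Finset.univ.filter fun e' : {e : E // e ∉ img} => q e'.val = w).card = k := by
      intro q w hint hcard
      rw [filter_subtype_card (fun e => e ∉ img) (fun e' => q e'.val = w)]
      have : (Finset.univ.filter fun e => ∃ _ : e ∉ img, q e = w)
          = (Finset.univ.filter fun e => q e = w) \ img := by
        ext e
        simp only [Finset.mem_filter, Finset.mem_univ, true_and, Finset.mem_sdiff]
        tauto
      rw [this]
      have := Finset.card_sdiff_add_card_inter (Finset.univ.filter fun e => q e = w) img
      omega
    have ht' : ∀ w, (Finset.univ.filter fun e' : {e : E // e ∉ img} => t e'.val = w).card = k :=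
      fun w => card_red t w (by rw [fiber_inter_t]; simp) (ht w)
    have hh' : ∀ w, (Finset.univ.filter fun e' : {e : E // e ∉ img} => h e'.val = w).card = k :=
      fun w => card_red h w (by rw [fiber_inter_h]; simp) (hh w)
    obtain ⟨C', hC'⟩ := ih (fun e' : {e : E // e ∉ img} => t e'.val) (fun e' : {e : E // e ∉ img} => h e'.val) ht' hh'
    refine ⟨fun e => if he : e ∈ img then Fin.last k else (C' ⟨e, he⟩).castSucc, ?_⟩
    intro e e' hc hth
    by_cases he : e ∈ img <;> by_cases he' : e' ∈ img <;>
      simp only [he, he', dif_pos, dif_neg, not_false_iff] at hc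
    · -- both in matching
      rw [himg] at he he'
      simp only [Finset.mem_image, Finset.mem_univ, true_and] at he he'
      obtain ⟨w, -, rfl⟩ := he
      obtain ⟨w', -, rfl⟩ := he'
      rcases hth with hth | hth
      · rw [hsel1, hsel1] at hth; rw [hth]
      · rw [hsel2, hsel2] at hth; rw [finj hth]
    · exact absurd hc.symm (Fin.castSucc_lt_last _).ne
    · exact absurd hc (Fin.castSucc_lt_last _).ne
    · have := hC' ⟨e, he⟩ ⟨e', he'⟩ (Fin.castSucc_injective _ hc) hth
      exact Subtype.ext_iff.mp this
def sigmaFiberEquiv {W : Type} [DecidableEq W] (c : W → ℕ) (w0 : W) :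
    {a : Σ w : W, Fin (c w) // a.1 = w0} ≃ Fin (c w0) where
  toFun a := Fin.cast (congrArg c a.2) a.1.2
  invFun i := ⟨⟨w0, i⟩, rfl⟩
  left_inv := by rintro ⟨⟨w, b⟩, rfl⟩; rfl
  right_inv := by intro i; rfl

lemma lemA {E W : Type} [Fintype E] [Fintype W] [DecidableEq E] [DecidableEq W]
    (k : ℕ) (t h : E → W)
    (ht : ∀ w, (Finset.univ.filter fun e => t e = w).card ≤ k)
    (hh : ∀ w, (Finset.univ.filter fun e => h e = w).card ≤ k) :
    ∃ C : E → Fin k, ∀ e e', C e = C e' → (t e = t e' ∨ h e = h e') → e = e' := by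
  set dt : W → ℕ := fun w => (Finset.univ.filter fun e => t e = w).card with hdt
  set dh : W → ℕ := fun w => (Finset.univ.filter fun e => h e = w).card with hdh
  have sum_dt : ∑ w, dt w = Fintype.card E := by
    rw [hdt, ← Finset.card_univ]
    exact (Finset.card_eq_sum_card_fiberwise (f := t) (fun e _ => Finset.mem_univ (t e))).symm
  have sum_dh : ∑ w, dh w = Fintype.card E := by
    rw [hdh, ← Finset.card_univ]
    exact (Finset.card_eq_sum_card_fiberwise (f := h) (fun e _ => Finset.mem_univ (h e))).symm
  have cards : Fintype.card (Σ w : W, Fin (k - dt w)) = Fintype.card (Σ w : W, Fin (k - dh w)) := by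
    rw [Fintype.card_sigma, Fintype.card_sigma]
    simp only [Fintype.card_fin]
    have e1 : ∑ w, (k - dt w) + ∑ w, dt w = ∑ w : W, k := by
      rw [← Finset.sum_add_distrib]
      exact Finset.sum_congr rfl fun w _ => Nat.sub_add_cancel (ht w)
    have e2 : ∑ w, (k - dh w) + ∑ w, dh w = ∑ w : W, k := by
      rw [← Finset.sum_add_distrib]
      exact Finset.sum_congr rfl fun w _ => Nat.sub_add_cancel (hh w)
    omega
  let ψ : (Σ w : W, Fin (k - dt w)) ≃ (Σ w : W, Fin (k - dh w)) := Fintype.equivOfCardEq cards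
  set t' : E ⊕ (Σ w : W, Fin (k - dt w)) → W := fun x => Sum.elim t (fun a => a.1) x with ht'
  set h' : E ⊕ (Σ w : W, Fin (k - dt w)) → W := fun x => Sum.elim h (fun a => (ψ a).1) x with hh'
  have count : ∀ (u : E → W) (v : (Σ w : W, Fin (k - dt w)) → W) (w : W),
      (Finset.univ.filter fun x : E ⊕ (Σ w : W, Fin (k - dt w)) => Sum.elim u v x = w).card
        = (Finset.univ.filter fun e => u e = w).card
          + (Finset.univ.filter fun a => v a = w).card := by
    intro u v w
    have hcongr := Fintype.card_congr
      (Equiv.subtypeSum (p := fun x : E ⊕ (Σ w : W, Fin (k - dt w)) => Sum.elim u v x = w))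
    rw [Fintype.card_sum] at hcongr
    rw [← Fintype.card_subtype, hcongr, ← Fintype.card_subtype, ← Fintype.card_subtype]
    rfl
  have ht'' : ∀ w, (Finset.univ.filter fun x => t' x = w).card = k := by
    intro w
    rw [ht', count]
    have : (Finset.univ.filter fun a : Σ w : W, Fin (k - dt w) => a.1 = w).card = k - dt w := by
      rw [← Fintype.card_subtype, Fintype.card_congr (sigmaFiberEquiv _ w), Fintype.card_fin]
    rw [this]
    exact Nat.add_sub_cancel' (ht w)
  have hh'' : ∀ w, (Finset.univ.filter fun x => h' x = w).card = k := by
    intro w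
    rw [hh', count]
    have : (Finset.univ.filter fun a : Σ w : W, Fin (k - dt w) => (ψ a).1 = w).card = k - dh w := by
      rw [← Fintype.card_subtype]
      rw [Fintype.card_congr (ψ.subtypeEquiv (fun a => Iff.rfl) :
        {a // (ψ a).1 = w} ≃ {b // b.1 = w}),
        Fintype.card_congr (sigmaFiberEquiv (fun w => k - dh w) w), Fintype.card_fin]
    rw [this]
    exact Nat.add_sub_cancel' (hh w)
  obtain ⟨C', hC'⟩ := A0 k t' h' ht'' hh''
  refine ⟨fun e => C' (Sum.inl e), fun e e' hc hth => ?_⟩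
  have := hC' (Sum.inl e) (Sum.inl e') hc (by simpa [ht', hh'] using hth)
  exact Sum.inl.inj this
lemma lemB_half {V E : Type} [Fintype V] [Fintype E] (k : ℕ) (hk : 1 ≤ k) (pr : E → V)
    [DecidableEq V] (C : E → Fin k)
    (hprop : ∀ e e' v, C e = C e' → pr e = v → pr e' = v →
      rk (Finset.univ.filter fun x => pr x = v) e / k
        = rk (Finset.univ.filter fun x => pr x = v) e' / k → e = e')
    (c : Fin k) (v : V) :
    (Finset.univ.filter fun e => C e = c ∧ pr e = v).card * k
      ≤ (Finset.univ.filter fun e => pr e = v).card + (k - 1) := by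
  classical
  set fib := Finset.univ.filter fun x => pr x = v with hfib
  set d := fib.card with hd
  have hsub : (Finset.univ.filter fun e => C e = c ∧ pr e = v) ⊆ fib := by
    intro e he
    simp only [Finset.mem_filter, Finset.mem_univ, true_and, hfib] at he ⊢
    exact he.2
  by_cases hd0 : d = 0
  · have : (Finset.univ.filter fun e => C e = c ∧ pr e = v).card = 0 :=
      Nat.le_zero.mp (hd0 ▸ Finset.card_le_card hsub)
    simp [this]
  · have hcard : (Finset.univ.filter fun e => C e = c ∧ pr e = v).card ≤ (d-1)/k + 1 := by
      have := Finset.card_le_card_of_injOn (f := fun e => rk fib e / k)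
        (s := Finset.univ.filter fun e => C e = c ∧ pr e = v)
        (t := Finset.range ((d-1)/k + 1)) ?_ ?_
      · simpa using this
      · intro e he
        simp only [Finset.mem_coe, Finset.mem_filter, Finset.mem_univ, true_and] at he ⊢
        have hmem : e ∈ fib := hsub (by simp [he.1, he.2])
        have hlt := rk_lt hmem
        rw [Finset.mem_range]
        show rk fib e / k < (d-1)/k + 1
        have h1 : rk fib e ≤ d - 1 := by omega
        have := Nat.div_le_div_right (c := k) h1
        omega
      · intro e he e' he' hre
        simp only [Finset.coe_filter, Set.mem_setOf_eq, Finset.mem_univ, true_and] at he he'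
        exact hprop e e' v (he.1.trans he'.1.symm) he.2 he'.2 hre
    have h2 : ((d-1)/k + 1) * k ≤ d + (k - 1) := by
      rw [Nat.add_mul, one_mul]
      have := Nat.div_mul_le_self (d-1) k
      omega
    calc (Finset.univ.filter fun e => C e = c ∧ pr e = v).card * k
        ≤ ((d-1)/k + 1) * k := Nat.mul_le_mul_right k hcard
      _ ≤ d + (k-1) := h2

lemma lemB {V E : Type} [Fintype V] [Fintype E] [DecidableEq V]
    (D : E → V × V) (k : ℕ) (hk : 1 ≤ k) :
    ∃ C : E → Fin k, ∀ (c : Fin k) (v : V),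
      (Finset.univ.filter fun e => C e = c ∧ (D e).2 = v).card * k
        ≤ (Finset.univ.filter fun e => (D e).2 = v).card + (k-1) ∧
      (Finset.univ.filter fun e => C e = c ∧ (D e).1 = v).card * k
        ≤ (Finset.univ.filter fun e => (D e).1 = v).card + (k-1) := by
  classical
  set n := Fintype.card E with hn
  have hrkle : ∀ (pr : E → V) (e : E),
      rk (Finset.univ.filter fun x => pr x = pr e) e / k < n + 1 := by
    intro pr e
    have h1 : rk (Finset.univ.filter fun x => pr x = pr e) e
        < (Finset.univ.filter fun x => pr x = pr e).card := rk_lt (by simp)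
    have h2 := Finset.card_filter_le Finset.univ (fun x => pr x = pr e)
    have h3 := Nat.div_le_self (rk (Finset.univ.filter fun x => pr x = pr e) e) k
    rw [Finset.card_univ] at h2
    omega
  set W := V × Fin (n + 1) with hW
  set t' : E → W := fun e => ((D e).1, ⟨rk (Finset.univ.filter fun x => (D x).1 = (D e).1) e / k,
    hrkle (fun x => (D x).1) e⟩) with ht'
  set h' : E → W := fun e => ((D e).2, ⟨rk (Finset.univ.filter fun x => (D x).2 = (D e).2) e / k,
    hrkle (fun x => (D x).2) e⟩) with hh'
  have fiberbound : ∀ (pr : E → V) (f : E → W),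
      (∀ e, f e = (pr e, ⟨rk (Finset.univ.filter fun x => pr x = pr e) e / k, hrkle pr e⟩)) →
      ∀ w : W, (Finset.univ.filter fun e => f e = w).card ≤ k := by
    rintro pr f hf ⟨v, j⟩
    have key : ∀ e, f e = (v, j) → pr e = v ∧
        rk (Finset.univ.filter fun x => pr x = v) e / k = j.val := by
      intro e he
      rw [hf e, Prod.mk.injEq] at he
      obtain ⟨h1, h2⟩ := he
      refine ⟨h1, ?_⟩
      rw [← h2]
      congr 2 <;> rw [h1]
    have := Finset.card_le_card_of_injOn (f := fun e => rk (Finset.univ.filter fun x => pr x = v) e)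
      (s := Finset.univ.filter fun e => f e = (v, j))
      (t := Finset.Ico (j.val * k) (j.val * k + k)) ?_ ?_
    · simpa using this
    · intro e he
      simp only [Finset.mem_coe, Finset.mem_filter, Finset.mem_univ, true_and] at he ⊢
      obtain ⟨h1, h2⟩ := key e he
      rw [Finset.mem_Ico]
      show j.val * k ≤ rk (Finset.univ.filter fun x => pr x = v) e ∧
        rk (Finset.univ.filter fun x => pr x = v) e < j.val * k + k
      have hdm := Nat.div_add_mod (rk (Finset.univ.filter fun x => pr x = v) e) k
      have hml : (rk (Finset.univ.filter fun x => pr x = v) e) % k < k := Nat.mod_lt _ hk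
      rw [h2, Nat.mul_comm] at hdm
      omega
    · intro e he e' he' hre
      simp only [Finset.coe_filter, Set.mem_setOf_eq, Finset.mem_univ, true_and] at he he'
      exact rk_injOn (by simp [(key e he).1]) (by simp [(key e' he').1]) hre
  obtain ⟨C, hC⟩ := lemA k t' h'
    (fiberbound (fun e => (D e).1) t' (fun e => rfl))
    (fiberbound (fun e => (D e).2) h' (fun e => rfl))
  refine ⟨C, fun c v => ⟨?_, ?_⟩⟩
  · apply lemB_half k hk (fun e => (D e).2) C ?_ c v
    intro e e' v' hc h1 h2 hr
    have h1' : (D e).2 = v' := h1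
    have h2' : (D e').2 = v' := h2
    have hr' : rk (Finset.univ.filter fun x => (D x).2 = v') e / k
        = rk (Finset.univ.filter fun x => (D x).2 = v') e' / k := hr
    apply hC e e' hc
    right
    rw [Prod.ext_iff]
    refine ⟨?_, ?_⟩
    · show (D e).2 = (D e').2
      rw [h1', h2']
    · apply Fin.ext
      show rk (Finset.univ.filter fun x => (D x).2 = (D e).2) e / k
        = rk (Finset.univ.filter fun x => (D x).2 = (D e').2) e' / k
      rw [h1', h2']
      exact hr'
  · apply lemB_half k hk (fun e => (D e).1) C ?_ c v
    intro e e' v' hc h1 h2 hr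
    have h1' : (D e).1 = v' := h1
    have h2' : (D e').1 = v' := h2
    have hr' : rk (Finset.univ.filter fun x => (D x).1 = v') e / k
        = rk (Finset.univ.filter fun x => (D x).1 = v') e' / k := hr
    apply hC e e' hc
    left
    rw [Prod.ext_iff]
    refine ⟨?_, ?_⟩
    · show (D e).1 = (D e').1
      rw [h1', h2']
    · apply Fin.ext
      show rk (Finset.univ.filter fun x => (D x).1 = (D e).1) e / k
        = rk (Finset.univ.filter fun x => (D x).1 = (D e').1) e' / k
      rw [h1', h2']
      exact hr'

namespace MG

lemma enat_pos_of_sum {x y : ℕ∞} (hxy : 1 ≤ x + y) (hx : x = 0) : 1 ≤ y := by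
  rwa [hx, zero_add] at hxy

lemma enat_one_le_or {x : ℕ∞} : 1 ≤ x ∨ x = 0 := by
  rcases eq_or_ne x 0 with h | h
  · exact Or.inr h
  · exact Or.inl (ENat.one_le_iff_ne_zero.mpr h)

lemma orient_exists {V E : Type} [Fintype V] [Fintype E] [DecidableEq V]
    (ends : E → Sym2 V) (g h : V → ℕ∞) (hgh : ValidPair ends g h) (s : Sym2 V)
    (e0 : E) (he0 : ends e0 = s) :
    ∃ p : V × V, Sym2.mk p.1 p.2 = s ∧ 1 ≤ g p.2 ∧ 1 ≤ h p.1 := by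
  obtain ⟨h1, h2, h3⟩ := hgh
  induction s using Sym2.inductionOn with
  | hf a b =>
    have hadj : Adj ends a b := ⟨e0, he0⟩
    have hga : 1 ≤ g a + g b := h2 a b hadj
    have hha : 1 ≤ h a + h b := h3 a b hadj
    have h1a := h1 a
    have h1b := h1 b
    rcases enat_one_le_or (x := g b) with hgb | hgb
    · rcases enat_one_le_or (x := h a) with hha' | hha'
      · exact ⟨(a, b), rfl, hgb, hha'⟩
      · -- h a = 0, so g a ≥ 1 (from h1a) and h b ≥ 1 (from hha)
        refine ⟨(b, a), Sym2.eq_swap, ?_, ?_⟩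
        · exact enat_pos_of_sum (by rwa [add_comm] at h1a) hha'
        · exact enat_pos_of_sum hha hha'
    · -- g b = 0, so g a ≥ 1 (from hga), h b ≥ 1 (from h1b)
      refine ⟨(b, a), Sym2.eq_swap, ?_, ?_⟩
      · exact enat_pos_of_sum (by rwa [add_comm] at hga) hgb
      · exact enat_pos_of_sum h1b hgb

/-- The set of achievable numbers of colors is nonempty. -/
lemma coloring_set_nonempty {V E : Type} [Fintype V] [Fintype E] [DecidableEq V]
    (ends : E → Sym2 V) (g h : V → ℕ∞) (hgh : ValidPair ends g h) :
    {k | ∃ C : E → Fin k, GHColoring ends g h C}.Nonempty := by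
  classical
  refine ⟨Fintype.card E, Fintype.equivFin E, ?_⟩
  intro c
  -- the color class has at most one element
  have hsub : Subsingleton {e : E // Fintype.equivFin E e = c} := by
    constructor
    rintro ⟨e, he⟩ ⟨e', he'⟩
    exact Subtype.ext ((Fintype.equivFin E).injective (he.trans he'.symm))
  by_cases hne : Nonempty {e : E // Fintype.equivFin E e = c}
  · obtain ⟨e1⟩ := hne
    obtain ⟨p, hp, hgp, hhp⟩ := orient_exists ends g h hgh (ends e1.val) e1.val rfl
    refine ⟨fun _ => p, fun e => ?_, fun v => ?_, fun v => ?_⟩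
    · have : e = e1 := Subsingleton.elim e e1
      rw [this]
      exact hp
    · -- indegree bound
      by_cases hv : p.2 = v
      · calc (inDeg (fun _ : {e : E // Fintype.equivFin E e = c} => p) v : ℕ∞)
            ≤ (Fintype.card {e : E // Fintype.equivFin E e = c} : ℕ∞) := by
              exact_mod_cast Nat.cast_le.mpr (Finset.card_filter_le _ _ |>.trans
                Finset.card_univ.le)
          _ ≤ 1 := by
              exact_mod_cast Nat.cast_le.mpr (Fintype.card_le_one_iff_subsingleton.mpr hsub)
          _ ≤ g v := hv ▸ hgp
      · have : inDeg (fun _ : {e : E // Fintype.equivFin E e = c} => p) v = 0 := by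
          rw [inDeg, Finset.card_eq_zero]
          ext e
          simp [hv]
        rw [this]
        exact_mod_cast zero_le
    · by_cases hv : p.1 = v
      · calc (outDeg (fun _ : {e : E // Fintype.equivFin E e = c} => p) v : ℕ∞)
            ≤ (Fintype.card {e : E // Fintype.equivFin E e = c} : ℕ∞) := by
              exact_mod_cast Nat.cast_le.mpr (Finset.card_filter_le _ _ |>.trans
                Finset.card_univ.le)
          _ ≤ 1 := by
              exact_mod_cast Nat.cast_le.mpr (Fintype.card_le_one_iff_subsingleton.mpr hsub)
          _ ≤ h v := hv ▸ hhp
      · have : outDeg (fun _ : {e : E // Fintype.equivFin E e = c} => p) v = 0 := by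
          rw [outDeg, Finset.card_eq_zero]
          ext e
          simp [hv]
        rw [this]
        exact_mod_cast zero_le
  · -- empty class
    rw [not_nonempty_iff] at hne
    refine ⟨fun e => isEmptyElim e, fun e => isEmptyElim e, fun v => ?_, fun v => ?_⟩ <;>
    · have : Finset.univ (α := {e : E // Fintype.equivFin E e = c}) = ∅ :=
        Finset.univ_eq_empty
      simp only [inDeg, outDeg, this, Finset.filter_empty, Finset.card_empty]
      exact_mod_cast zero_le

end MG

lemma card_filter_subtype_eq {E : Type} [Fintype E] (p q : E → Prop)
    [DecidablePred p] [DecidablePred q] :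
    (Finset.univ.filter fun e' : {x // p x} => q e'.val).card
      = (Finset.univ.filter fun e => q e ∧ p e).card := by
  apply Finset.card_bij (fun e' _ => e'.val)
  · rintro ⟨e, hp⟩ hmem
    simp only [Finset.mem_filter, Finset.mem_univ, true_and] at hmem ⊢
    exact ⟨hmem, hp⟩
  · rintro ⟨e, hp⟩ - ⟨e2, hp2⟩ - hee
    exact Subtype.ext hee
  · intro e he
    simp only [Finset.mem_filter, Finset.mem_univ, true_and] at he
    exact ⟨⟨e, he.2⟩, by simpa using he.1, rfl⟩

namespace MG

theorem ghChromaticIndex_le_iff' {V E : Type} [Fintype V] [Fintype E] [DecidableEq V]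
    (ends : E → Sym2 V) (g h : V → ℕ∞) (hgh : ValidPair ends g h) (k : ℕ) (hk : 1 ≤ k) :
    ghChromaticIndex ends g h ≤ k ↔
      GHOrientable ends (fun v => (k : ℕ∞) * g v) (fun v => (k : ℕ∞) * h v) := by
  classical
  constructor
  · -- forward
    intro hle
    have hne := coloring_set_nonempty ends g h hgh
    obtain ⟨m, hmS, hmk⟩ : ∃ m, (∃ C : E → Fin m, GHColoring ends g h C) ∧ m ≤ k :=
      ⟨_, Nat.sInf_mem hne, hle⟩
    obtain ⟨C, hC⟩ := hmS
    have hC' : ∀ c : Fin m, ∃ D : {e // C e = c} → V × V,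
        IsOrientation (subEnds ends fun e => C e = c) D ∧
        (∀ v, (inDeg D v : ℕ∞) ≤ g v) ∧ (∀ v, (outDeg D v : ℕ∞) ≤ h v) := hC
    choose Dc hOr hIn hOut using hC'
    refine ⟨fun e => Dc (C e) ⟨e, rfl⟩, fun e => hOr (C e) ⟨e, rfl⟩, fun v => ?_, fun v => ?_⟩
    · -- indegree
      have hDD : ∀ (c : Fin m) (e : E) (he : C e = c),
          Dc c ⟨e, he⟩ = Dc (C e) ⟨e, rfl⟩ := by
        intro c e he
        subst he
        rfl
      have hsum : inDeg (fun e => Dc (C e) ⟨e, rfl⟩) v = ∑ c, inDeg (Dc c) v := by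
        rw [inDeg, Finset.card_eq_sum_card_fiberwise (f := fun e => C e) (t := Finset.univ)
          (fun e _ => Finset.mem_univ _)]
        refine Finset.sum_congr rfl fun c _ => ?_
        rw [Finset.filter_filter, inDeg]
        have hstep : (Finset.univ.filter fun e' : {e // C e = c} => (Dc c e').2 = v)
            = (Finset.univ.filter fun e' : {e // C e = c}
                => (Dc (C e'.val) ⟨e'.val, rfl⟩ : V × V).2 = v) := by
          apply Finset.filter_congr
          rintro ⟨e, he⟩ -
          rw [hDD c e he]
        rw [hstep,
          card_filter_subtype_eq (fun e => C e = c) (fun e => (Dc (C e) ⟨e, rfl⟩ : V × V).2 = v)]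
      rw [hsum]
      rw [Nat.cast_sum]
      calc (∑ c, (inDeg (Dc c) v : ℕ∞)) ≤ ∑ _c : Fin m, g v :=
            Finset.sum_le_sum (fun c _ => hIn c v)
        _ = (m : ℕ∞) * g v := by
            rw [Finset.sum_const, Finset.card_univ, Fintype.card_fin, nsmul_eq_mul]
        _ ≤ (k : ℕ∞) * g v := mul_le_mul_left (Nat.cast_le.mpr hmk) _
    · -- outdegree
      have hDD : ∀ (c : Fin m) (e : E) (he : C e = c),
          Dc c ⟨e, he⟩ = Dc (C e) ⟨e, rfl⟩ := by
        intro c e he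
        subst he
        rfl
      have hsum : outDeg (fun e => Dc (C e) ⟨e, rfl⟩) v = ∑ c, outDeg (Dc c) v := by
        rw [outDeg, Finset.card_eq_sum_card_fiberwise (f := fun e => C e) (t := Finset.univ)
          (fun e _ => Finset.mem_univ _)]
        refine Finset.sum_congr rfl fun c _ => ?_
        rw [Finset.filter_filter, outDeg]
        have hstep : (Finset.univ.filter fun e' : {e // C e = c} => (Dc c e').1 = v)
            = (Finset.univ.filter fun e' : {e // C e = c}
                => (Dc (C e'.val) ⟨e'.val, rfl⟩ : V × V).1 = v) := by
          apply Finset.filter_congr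
          rintro ⟨e, he⟩ -
          rw [hDD c e he]
        rw [hstep,
          card_filter_subtype_eq (fun e => C e = c) (fun e => (Dc (C e) ⟨e, rfl⟩ : V × V).1 = v)]
      rw [hsum]
      rw [Nat.cast_sum]
      calc (∑ c, (outDeg (Dc c) v : ℕ∞)) ≤ ∑ _c : Fin m, h v :=
            Finset.sum_le_sum (fun c _ => hOut c v)
        _ = (m : ℕ∞) * h v := by
            rw [Finset.sum_const, Finset.card_univ, Fintype.card_fin, nsmul_eq_mul]
        _ ≤ (k : ℕ∞) * h v := mul_le_mul_left (Nat.cast_le.mpr hmk) _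
  · -- backward
    rintro ⟨D, hDor, hDin, hDout⟩
    obtain ⟨C, hC⟩ := lemB D k hk
    apply Nat.sInf_le
    refine ⟨C, fun c => ?_⟩
    refine ⟨fun e' => D e'.val, fun e' => hDor e'.val, fun v => ?_, fun v => ?_⟩
    · -- inDeg bound
      have hcount : inDeg (fun e' : {e // C e = c} => D e'.val) v
          = (Finset.univ.filter fun e => C e = c ∧ (D e).2 = v).card := by
        rw [inDeg, card_filter_subtype_eq (fun e => C e = c) (fun e => (D e).2 = v)]
        congr 1
        apply Finset.filter_congr
        intro e _
        exact and_comm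
      rw [hcount]
      have hbound : (Finset.univ.filter fun e => C e = c ∧ (D e).2 = v).card * k
          ≤ inDeg D v + (k - 1) := (hC c v).1
      have hg : (inDeg D v : ℕ∞) ≤ (k : ℕ∞) * g v := hDin v
      rcases hgv : g v with _ | m
      · exact le_top
      · rw [hgv] at hg
        have hg' : inDeg D v ≤ k * m := by
          have : ((inDeg D v : ℕ) : ℕ∞) ≤ ((k * m : ℕ) : ℕ∞) := by
            rw [Nat.cast_mul]
            exact hg
          exact_mod_cast this
        have harith : (Finset.univ.filter fun e => C e = c ∧ (D e).2 = v).card ≤ m := by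
          by_contra hcon
          push_neg at hcon
          have hA : (m + 1) * k ≤ (Finset.univ.filter fun e => C e = c ∧ (D e).2 = v).card * k :=
            Nat.mul_le_mul_right k hcon
          have hB := hbound.trans (Nat.add_le_add_right hg' _)
          rw [Nat.add_mul, one_mul, Nat.mul_comm] at hA
          omega
        have hsome : ((m : ℕ) : ℕ∞) = some m := rfl
        rw [← hsome]
        exact_mod_cast harith
    · -- outDeg bound
      have hcount : outDeg (fun e' : {e // C e = c} => D e'.val) v
          = (Finset.univ.filter fun e => C e = c ∧ (D e).1 = v).card := by
        rw [outDeg, card_filter_subtype_eq (fun e => C e = c) (fun e => (D e).1 = v)]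
        congr 1
        apply Finset.filter_congr
        intro e _
        exact and_comm
      rw [hcount]
      have hbound : (Finset.univ.filter fun e => C e = c ∧ (D e).1 = v).card * k
          ≤ outDeg D v + (k - 1) := (hC c v).2
      have hg : (outDeg D v : ℕ∞) ≤ (k : ℕ∞) * h v := hDout v
      rcases hgv : h v with _ | m
      · exact le_top
      · rw [hgv] at hg
        have hg' : outDeg D v ≤ k * m := by
          have : ((outDeg D v : ℕ) : ℕ∞) ≤ ((k * m : ℕ) : ℕ∞) := by
            rw [Nat.cast_mul]
            exact hg
          exact_mod_cast this
        have harith : (Finset.univ.filter fun e => C e = c ∧ (D e).1 = v).card ≤ m := by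
          by_contra hcon
          push_neg at hcon
          have hA : (m + 1) * k ≤ (Finset.univ.filter fun e => C e = c ∧ (D e).1 = v).card * k :=
            Nat.mul_le_mul_right k hcon
          have hB := hbound.trans (Nat.add_le_add_right hg' _)
          rw [Nat.add_mul, one_mul, Nat.mul_comm] at hA
          omega
        have hsome : ((m : ℕ) : ℕ∞) = some m := rfl
        rw [← hsome]
        exact_mod_cast harith

end MG

namespace MG
/-- Lemma 2.3: for every multigraph `G`, valid pair `(g,h)`, and
integer `k ≥ 1`, `χ'_{(g,h)}(G) ≤ k` iff `G` is `(k·g, k·h)`-orientable. -/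
theorem ghChromaticIndex_le_iff {V E : Type} [Fintype V] [Fintype E] [DecidableEq V]
    (ends : E → Sym2 V) (g h : V → ℕ∞) (hgh : ValidPair ends g h) (k : ℕ) (hk : 1 ≤ k) :
    ghChromaticIndex ends g h ≤ k ↔
      GHOrientable ends (fun v => (k : ℕ∞) * g v) (fun v => (k : ℕ∞) * h v) := by
  exact ghChromaticIndex_le_iff' ends g h hgh k hk

end MG
end
end

section
/- For every multigraph G and every function f : V(G) → ℕ with f(v) ≥ 2 for all v, G is a degree-f pseudoforest if and only if G is (1, f−1)-orientable, i.e., G has an orientation in which every vertex has indegree at most 1 and every vertex v has outdegree at most f(v)−1. -/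
open Classical

noncomputable section

namespace MG

variable {V : Type} {E : Type} [Fintype V] [Fintype E] [DecidableEq V]

/-! ### Auxiliary machinery for Observation 3.1 -/

section Obs31

set_option linter.unusedSectionVars false

variable (ends : E → Sym2 V)

lemma mult_mk (v a b : V) :
    mult v s(a, b) = (if a = v then 1 else 0) + (if b = v then 1 else 0) := rfl

lemma sym2_exists (s : Sym2 V) : ∃ a b, s = s(a, b) := by
  induction s using Sym2.ind with
  | _ a b => exact ⟨a, b, rfl⟩

lemma mult_eq_zero_of_not_mem {v : V} {s : Sym2 V} (h : v ∉ s) : mult v s = 0 := by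
  obtain ⟨a, b, rfl⟩ := sym2_exists s
  rw [Sym2.mem_iff] at h
  push_neg at h
  rw [mult_mk, if_neg (fun hav => h.1 hav.symm), if_neg (fun hbv => h.2 hbv.symm)]

lemma adj_symm {u v : V} (h : Adj ends u v) : Adj ends v u := by
  obtain ⟨e, he⟩ := h; exact ⟨e, by rw [he, Sym2.eq_swap]⟩

lemma reaches_symm {u v : V} (h : Reaches ends u v) : Reaches ends v u := by
  induction h with
  | refl => exact Relation.ReflTransGen.refl
  | tail _ hab ih => exact Relation.ReflTransGen.head (adj_symm ends hab) ih

lemma mem_component_iff {u v : V} : u ∈ component ends v ↔ Reaches ends v u := by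
  simp [component]

lemma mem_component_self (v : V) : v ∈ component ends v :=
  (mem_component_iff ends).2 Relation.ReflTransGen.refl

lemma component_eq_of_mem {u v : V} (h : u ∈ component ends v) :
    component ends u = component ends v := by
  rw [mem_component_iff] at h
  ext w
  rw [mem_component_iff, mem_component_iff]
  exact ⟨fun hw => h.trans hw, fun hw => (reaches_symm ends h).trans hw⟩

lemma mem_comp_of_adj {u v w : V} (h : u ∈ component ends v) (ha : Adj ends u w) :
    w ∈ component ends v := by
  rw [mem_component_iff] at h ⊢
  exact h.tail ha

lemma ends_subset_comp {e : E} {u w : V} (hu : u ∈ ends e) (hw : w ∈ ends e) :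
    w ∈ component ends u := by
  obtain ⟨a, b, hab⟩ := sym2_exists (ends e)
  rw [hab, Sym2.mem_iff] at hu hw
  have hadj : Adj ends a b := ⟨e, hab⟩
  have hab' : b ∈ component ends a :=
    mem_comp_of_adj ends (mem_component_self ends a) hadj
  have hba' : a ∈ component ends b :=
    mem_comp_of_adj ends (mem_component_self ends b) (adj_symm ends hadj)
  rcases hu with rfl | rfl <;> rcases hw with rfl | rfl
  · exact mem_component_self ends _
  · exact hab'
  · exact hba'
  · exact mem_component_self ends _

lemma edge_within_comp {e : E} {u : V} (hu : u ∈ ends e) :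
    ∀ w ∈ ends e, w ∈ component ends u := fun _ hw => ends_subset_comp ends hu hw

/-- Walks of given length. -/
def walkN : ℕ → V → V → Prop
  | 0, a, b => a = b
  | n + 1, a, b => ∃ c, walkN n a c ∧ Adj ends c b

lemma walkN_reaches {a b : V} : ∀ {n : ℕ}, walkN ends n a b → Reaches ends a b := by
  intro n
  induction n generalizing b with
  | zero => rintro rfl; exact Relation.ReflTransGen.refl
  | succ n ih => rintro ⟨c, hw, ha⟩; exact (ih hw).tail ha

lemma reaches_walkN {a b : V} (h : Reaches ends a b) : ∃ n, walkN ends n a b := by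
  induction h with
  | refl => exact ⟨0, rfl⟩
  | tail _ ha ih => obtain ⟨n, hn⟩ := ih; exact ⟨n + 1, _, hn, ha⟩

/-- Root selection: a vertex of induced degree at most 1 if one exists in the
given set, else an arbitrary element. -/
noncomputable def rootOf (v : V) (S : Finset V) : V :=
  if h1 : ∃ u ∈ S, degreeIn ends S u ≤ 1 then h1.choose
  else if h2 : ∃ u, u ∈ S then h2.choose else v

noncomputable def root (v : V) : V := rootOf ends v (component ends v)

lemma root_mem (v : V) : root ends v ∈ component ends v := by
  unfold root rootOf
  split_ifs with h1 h2
  · exact h1.choose_spec.1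
  · exact h2.choose_spec
  · exact mem_component_self ends v

lemma root_eq_of_mem {u v : V} (h : u ∈ component ends v) : root ends u = root ends v := by
  unfold root
  rw [component_eq_of_mem ends h]
  unfold rootOf
  split_ifs with h1 h2
  · rfl
  · rfl
  · exact absurd ⟨v, mem_component_self ends v⟩ h2

lemma root_degree_le (v : V)
    (h1 : ∃ u ∈ component ends v, degreeIn ends (component ends v) u ≤ 1) :
    degreeIn ends (component ends v) (root ends v) ≤ 1 := by
  unfold root rootOf
  rw [dif_pos h1]
  exact h1.choose_spec.2

lemma exists_walk_from_root (v : V) : ∃ n, walkN ends n (root ends v) v :=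
  reaches_walkN ends (reaches_symm ends ((mem_component_iff ends).1 (root_mem ends v)))

noncomputable def dist (v : V) : ℕ := Nat.find (exists_walk_from_root ends v)

lemma dist_eq_zero_iff {v : V} : dist ends v = 0 ↔ root ends v = v := by
  unfold dist
  rw [Nat.find_eq_zero]
  exact Iff.rfl

lemma parent_exists {v : V} (h : root ends v ≠ v) :
    ∃ p : V × E, ends p.2 = s(p.1, v) ∧ root ends p.1 = root ends v ∧
      dist ends p.1 + 1 = dist ends v := by
  have hd : dist ends v ≠ 0 := fun h0 => h ((dist_eq_zero_iff ends).1 h0)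
  obtain ⟨m, hm⟩ : ∃ m, dist ends v = m + 1 := ⟨dist ends v - 1, by omega⟩
  have hspec : walkN ends (dist ends v) (root ends v) v := Nat.find_spec (exists_walk_from_root ends v)
  rw [hm] at hspec
  obtain ⟨c, hw, e, he⟩ := hspec
  have hcr : Reaches ends (root ends v) c := walkN_reaches ends hw
  have hcmem : c ∈ component ends v := by
    rw [mem_component_iff]
    exact ((mem_component_iff ends).1 (root_mem ends v)).trans hcr
  have hroot : root ends c = root ends v := root_eq_of_mem ends hcmem
  have hw' : walkN ends m (root ends c) c := by simp only [hroot]; exact hw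
  have hle : dist ends c ≤ m := Nat.find_le hw'
  have hge : dist ends v ≤ dist ends c + 1 := by
    apply Nat.find_le
    refine ⟨c, ?_, ⟨e, he⟩⟩
    exact cast (congrArg (fun z => walkN ends (dist ends c) z c) hroot)
      (Nat.find_spec (exists_walk_from_root ends c))
  exact ⟨(c, e), he, hroot, by change dist ends c + 1 = dist ends v; omega⟩

variable (j : E)

noncomputable def pdata (v : V) : V × E :=
  if h : root ends v ≠ v then (parent_exists ends h).choose else (v, j)

noncomputable def parentT (v : V) : V := (pdata ends j v).1

noncomputable def pedge (v : V) : E := (pdata ends j v).2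

lemma pdata_spec {v : V} (h : root ends v ≠ v) :
    ends (pedge ends j v) = s(parentT ends j v, v) ∧
      root ends (parentT ends j v) = root ends v ∧
      dist ends (parentT ends j v) + 1 = dist ends v := by
  unfold parentT pedge pdata
  rw [dif_pos h]
  exact (parent_exists ends h).choose_spec

lemma pedge_inj {v w : V} (hv : root ends v ≠ v) (hw : root ends w ≠ w)
    (h : pedge ends j v = pedge ends j w) : v = w := by
  obtain ⟨he1, _, hd1⟩ := pdata_spec ends j hv
  obtain ⟨he2, _, hd2⟩ := pdata_spec ends j hw
  rw [h, he2] at he1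
  rw [Sym2.eq_iff] at he1
  rcases he1 with ⟨h1, h2⟩ | ⟨h1, h2⟩
  · exact h2.symm
  · rw [h1] at hd2
    rw [← h2] at hd1
    omega

lemma mem_pedge {v : V} (h : root ends v ≠ v) : v ∈ ends (pedge ends j v) := by
  rw [(pdata_spec ends j h).1, Sym2.mem_iff]; right; rfl

lemma parent_mem_pedge {v : V} (h : root ends v ≠ v) :
    parentT ends j v ∈ ends (pedge ends j v) := by
  rw [(pdata_spec ends j h).1, Sym2.mem_iff]; left; rfl

lemma parent_mem_comp {v : V} (h : root ends v ≠ v) :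
    parentT ends j v ∈ component ends v :=
  ends_subset_comp ends (mem_pedge ends j h) (parent_mem_pedge ends j h)

lemma chain_props {x : V} : ∀ i, i ≤ dist ends x →
    (parentT ends j)^[i] x ∈ component ends x ∧
      dist ends ((parentT ends j)^[i] x) + i = dist ends x := by
  intro i
  induction i with
  | zero => exact fun _ => ⟨mem_component_self ends x, rfl⟩
  | succ i ih =>
    intro hi
    obtain ⟨hmem, hdist⟩ := ih (by omega)
    set c := (parentT ends j)^[i] x with hc
    have hroots : root ends c = root ends x := root_eq_of_mem ends hmem
    have hP : root ends c ≠ c := by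
      intro hr
      rw [(dist_eq_zero_iff ends).2 hr] at hdist
      omega
    obtain ⟨_, _, hd⟩ := pdata_spec ends j hP
    rw [Function.iterate_succ_apply', ← hc]
    constructor
    · have := parent_mem_comp ends j hP
      rw [component_eq_of_mem ends hmem] at this
      exact this
    · omega

lemma handshake (S : Finset V) :
    (∑ v ∈ S, degreeIn ends S v) = 2 * edgesWithin ends S := by
  unfold degreeIn edgesWithin
  rw [Finset.sum_comm]
  rw [Finset.sum_congr rfl (g := fun _ => 2) ?_, Finset.sum_const, smul_eq_mul, mul_comm]
  intro e he
  rw [Finset.mem_filter] at he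
  obtain ⟨a, b, hab⟩ := sym2_exists (ends e)
  have ha : a ∈ S := he.2 a (by rw [hab, Sym2.mem_iff]; left; rfl)
  have hb : b ∈ S := he.2 b (by rw [hab, Sym2.mem_iff]; right; rfl)
  simp only [hab, mult_mk, Finset.sum_add_distrib, Finset.sum_ite_eq, ha, hb, if_true]

lemma degree_eq_degreeIn (z : V) :
    degree ends z = degreeIn ends (component ends z) z := by
  unfold degree degreeIn
  refine (Finset.sum_subset (Finset.filter_subset _ _) ?_).symm
  intro e _ he
  rw [Finset.mem_filter] at he
  push_neg at he
  apply mult_eq_zero_of_not_mem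
  intro hz
  obtain ⟨u, hu, hu2⟩ := he (Finset.mem_univ e)
  exact hu2 (ends_subset_comp ends hz hu)

lemma pedge_mem_within {z v : V} (hv : v ∈ component ends z) (hP : root ends v ≠ v) :
    pedge ends j v ∈ Finset.univ.filter (fun e => ∀ u ∈ ends e, u ∈ component ends z) := by
  rw [Finset.mem_filter]
  refine ⟨Finset.mem_univ _, fun u hu => ?_⟩
  have := ends_subset_comp ends (mem_pedge ends j hP) hu
  rwa [component_eq_of_mem ends hv] at this

lemma mem_erase_root {z v : V} (hv : v ∈ (component ends z).erase (root ends z)) :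
    v ∈ component ends z ∧ root ends v ≠ v := by
  rw [Finset.mem_erase] at hv
  refine ⟨hv.2, ?_⟩
  rw [root_eq_of_mem ends hv.2]
  exact fun h => hv.1 h.symm

lemma card_pc (z : V) :
    (((component ends z).erase (root ends z)).image (pedge ends j)).card
      = (component ends z).card - 1 := by
  rw [Finset.card_image_of_injOn, Finset.card_erase_of_mem (root_mem ends z)]
  intro a ha b hb hab
  exact pedge_inj ends j (mem_erase_root ends (Finset.mem_coe.1 ha)).2 (mem_erase_root ends (Finset.mem_coe.1 hb)).2 hab

lemma pc_subset (z : V) :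
    ((component ends z).erase (root ends z)).image (pedge ends j)
      ⊆ Finset.univ.filter (fun e => ∀ u ∈ ends e, u ∈ component ends z) := by
  intro e he
  rw [Finset.mem_image] at he
  obtain ⟨v, hv, rfl⟩ := he
  exact pedge_mem_within ends j (mem_erase_root ends hv).1 (mem_erase_root ends hv).2

include j in
lemma card_comp_le (z : V) :
    (component ends z).card ≤ edgesWithin ends (component ends z) + 1 := by
  have h1 := Finset.card_le_card (pc_subset ends j z)
  rw [card_pc ends j z] at h1
  have h2 : 1 ≤ (component ends z).card :=
    Finset.card_pos.2 ⟨z, mem_component_self ends z⟩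
  unfold edgesWithin
  omega

lemma npedge_unique {z : V}
    (hpf : edgesWithin ends (component ends z) ≤ (component ends z).card) {e1 e2 : E}
    (h1 : e1 ∈ Finset.univ.filter (fun e => ∀ u ∈ ends e, u ∈ component ends z))
    (h2 : e2 ∈ Finset.univ.filter (fun e => ∀ u ∈ ends e, u ∈ component ends z))
    (hn1 : ¬∃ v, root ends v ≠ v ∧ pedge ends j v = e1)
    (hn2 : ¬∃ v, root ends v ≠ v ∧ pedge ends j v = e2) : e1 = e2 := by
  by_contra hne
  set PC := ((component ends z).erase (root ends z)).image (pedge ends j) with hPC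
  have he1 : e1 ∉ PC := by
    intro h
    rw [hPC, Finset.mem_image] at h
    obtain ⟨v, hv, hveq⟩ := h
    exact hn1 ⟨v, (mem_erase_root ends hv).2, hveq⟩
  have he2 : e2 ∉ PC := by
    intro h
    rw [hPC, Finset.mem_image] at h
    obtain ⟨v, hv, hveq⟩ := h
    exact hn2 ⟨v, (mem_erase_root ends hv).2, hveq⟩
  have hsub : insert e1 (insert e2 PC) ⊆
      Finset.univ.filter (fun e => ∀ u ∈ ends e, u ∈ component ends z) := by
    intro e he
    rw [Finset.mem_insert, Finset.mem_insert] at he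
    rcases he with rfl | rfl | he
    · exact h1
    · exact h2
    · exact pc_subset ends j z he
  have hcard := Finset.card_le_card hsub
  rw [Finset.card_insert_of_notMem (by
        rw [Finset.mem_insert]; push_neg; exact ⟨hne, he1⟩),
      Finset.card_insert_of_notMem he2, card_pc ends j z] at hcard
  have h2' : 1 ≤ (component ends z).card :=
    Finset.card_pos.2 ⟨z, mem_component_self ends z⟩
  unfold edgesWithin at hpf
  omega

lemma root_low_degree {z : V}
    (hall : ∀ e ∈ Finset.univ.filter (fun e => ∀ u ∈ ends e, u ∈ component ends z),
      ∃ v, root ends v ≠ v ∧ pedge ends j v = e) :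
    degreeIn ends (component ends z) (root ends z) ≤ 1 := by
  have hsub : Finset.univ.filter (fun e => ∀ u ∈ ends e, u ∈ component ends z)
      ⊆ ((component ends z).erase (root ends z)).image (pedge ends j) := by
    intro e he
    obtain ⟨v, hv, hveq⟩ := hall e he
    rw [Finset.mem_image]
    refine ⟨v, ?_, hveq⟩
    rw [Finset.mem_erase]
    have hvmem : v ∈ component ends z := by
      rw [Finset.mem_filter] at he
      exact he.2 v (hveq ▸ mem_pedge ends j hv)
    refine ⟨?_, hvmem⟩
    intro hveq2
    rw [root_eq_of_mem ends hvmem] at hv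
    exact hv hveq2.symm
  have hle := Finset.card_le_card hsub
  rw [card_pc ends j z] at hle
  have hlow : ∃ u ∈ component ends z, degreeIn ends (component ends z) u ≤ 1 := by
    by_contra hco
    push_neg at hco
    have hsum : (component ends z).card * 2 ≤
        ∑ v ∈ component ends z, degreeIn ends (component ends z) v := by
      calc (component ends z).card * 2 = ∑ _v ∈ component ends z, 2 := by
            rw [Finset.sum_const, smul_eq_mul]
        _ ≤ _ := Finset.sum_le_sum (fun u hu => hco u hu)
    rw [handshake] at hsum
    have h2' : 1 ≤ (component ends z).card :=
      Finset.card_pos.2 ⟨z, mem_component_self ends z⟩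
    unfold edgesWithin at hsum
    omega
  exact root_degree_le ends z hlow

noncomputable def xe (e : E) : V := (sym2_exists (ends e)).choose

lemma xe_mem (e : E) : xe ends e ∈ ends e := by
  obtain ⟨b, hb⟩ := (sym2_exists (ends e)).choose_spec
  rw [show (sym2_exists (ends e)).choose = xe ends e from rfl] at hb
  rw [hb, Sym2.mem_iff]; left; rfl

/-- Whether `v` lies on the "reassignment chain" of the extra (non-parent) edge of
its component. -/
def shiftP (v : V) : Prop :=
  ∃ e', (∀ u ∈ ends e', u ∈ component ends v) ∧
    (¬ ∃ w, root ends w ≠ w ∧ pedge ends j w = e') ∧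
    ∃ i, i < dist ends (xe ends e') ∧ (parentT ends j)^[i] (xe ends e') = v

/-- The head assignment. -/
noncomputable def headF (e : E) : V :=
  if h : ∃ v, root ends v ≠ v ∧ pedge ends j v = e then
    (if shiftP ends j h.choose then parentT ends j h.choose else h.choose)
  else xe ends e

lemma headF_pedge {v : V} (hv : root ends v ≠ v) :
    headF ends j (pedge ends j v) =
      if shiftP ends j v then parentT ends j v else v := by
  unfold headF
  have hex : ∃ w, root ends w ≠ w ∧ pedge ends j w = pedge ends j v := ⟨v, hv, rfl⟩
  rw [dif_pos hex]
  have hch : hex.choose = v :=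
    pedge_inj ends j hex.choose_spec.1 hv hex.choose_spec.2
  rw [hch]

lemma headF_np {e : E} (hn : ¬ ∃ w, root ends w ≠ w ∧ pedge ends j w = e) :
    headF ends j e = xe ends e := by
  unfold headF
  rw [dif_neg hn]

lemma headF_mem (e : E) : headF ends j e ∈ ends e := by
  unfold headF
  split_ifs with hex hs
  · have hspec := hex.choose_spec
    have h1 := parent_mem_pedge ends j hspec.1
    rw [hspec.2] at h1
    exact h1
  · have hspec := hex.choose_spec
    have h1 := mem_pedge ends j hspec.1
    rw [hspec.2] at h1
    exact h1
  · exact xe_mem ends e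

lemma shift_comp_eq {v : V} (hs : shiftP ends j v) :
    ∃ e', (∀ u ∈ ends e', u ∈ component ends v) ∧
      (¬ ∃ w, root ends w ≠ w ∧ pedge ends j w = e') ∧
      ∃ i, i < dist ends (xe ends e') ∧ (parentT ends j)^[i] (xe ends e') = v ∧
        component ends (xe ends e') = component ends v := hs.elim
  (fun e' he' => ⟨e', he'.1, he'.2.1, he'.2.2.elim (fun i hi =>
    ⟨i, hi.1, hi.2, component_eq_of_mem ends (he'.1 _ (xe_mem ends e'))⟩)⟩)

lemma headF_inj (hpf : IsPseudoforest ends) : Function.Injective (headF ends j) := by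
  intro e1 e2 heq
  by_cases hex1 : ∃ v, root ends v ≠ v ∧ pedge ends j v = e1 <;>
    by_cases hex2 : ∃ v, root ends v ≠ v ∧ pedge ends j v = e2
  · -- both parent edges
    obtain ⟨v1, hP1, he1⟩ := hex1
    obtain ⟨v2, hP2, he2⟩ := hex2
    rw [← he1, ← he2] at heq ⊢
    rw [headF_pedge ends j hP1, headF_pedge ends j hP2] at heq
    suffices hv : v1 = v2 by rw [hv]
    split_ifs at heq with hs1 hs2 hs2
    · -- both shifted
      obtain ⟨f1, hw1, hn1, i1, hi1, hc1, hcc1⟩ := shift_comp_eq ends j hs1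
      obtain ⟨f2, hw2, hn2, i2, hi2, hc2, hcc2⟩ := shift_comp_eq ends j hs2
      have hp1 : parentT ends j v1 ∈ component ends v1 := parent_mem_comp ends j hP1
      have hp2 : parentT ends j v2 ∈ component ends v2 := parent_mem_comp ends j hP2
      have hcomp : component ends v1 = component ends v2 := by
        rw [← component_eq_of_mem ends hp1, heq, component_eq_of_mem ends hp2]
      have hf12 : f1 = f2 := by
        refine npedge_unique ends j (hpf v1) ?_ ?_ hn1 hn2
        · exact Finset.mem_filter.2 ⟨Finset.mem_univ _, hw1⟩
        · refine Finset.mem_filter.2 ⟨Finset.mem_univ _, ?_⟩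
          intro u hu
          rw [hcomp]
          exact hw2 u hu
      subst hf12
      set x := xe ends f1 with hx
      have hch1 : (parentT ends j)^[i1 + 1] x = parentT ends j v1 := by
        rw [Function.iterate_succ_apply', hc1]
      have hch2 : (parentT ends j)^[i2 + 1] x = parentT ends j v2 := by
        rw [Function.iterate_succ_apply', hc2]
      have hd1 := (chain_props ends j (x := x) (i1 + 1) (by omega)).2
      have hd2 := (chain_props ends j (x := x) (i2 + 1) (by omega)).2
      rw [hch1] at hd1
      rw [hch2] at hd2
      rw [heq] at hd1
      have : i1 = i2 := by omega
      rw [← hc1, ← hc2, this]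
    · -- v1 shifted, v2 not
      exfalso
      obtain ⟨f1, hw1, hn1, i1, hi1, hc1, hcc1⟩ := shift_comp_eq ends j hs1
      set x := xe ends f1 with hx
      have hch1 : (parentT ends j)^[i1 + 1] x = v2 := by
        rw [Function.iterate_succ_apply', hc1, heq]
      have hd1 := (chain_props ends j (x := x) (i1 + 1) (by omega)).2
      rw [hch1] at hd1
      by_cases hlt : i1 + 1 < dist ends x
      · apply hs2
        refine ⟨f1, ?_, hn1, i1 + 1, hlt, hch1⟩
        intro u hu
        have hv2c : v2 ∈ component ends v1 := heq ▸ parent_mem_comp ends j hP1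
        rw [component_eq_of_mem ends hv2c]
        exact hw1 u hu
      · have hd0 : dist ends v2 = 0 := by omega
        exact hP2 ((dist_eq_zero_iff ends).1 hd0)
    · -- v2 shifted, v1 not
      exfalso
      obtain ⟨f2, hw2, hn2, i2, hi2, hc2, hcc2⟩ := shift_comp_eq ends j hs2
      set x := xe ends f2 with hx
      have hch2 : (parentT ends j)^[i2 + 1] x = v1 := by
        rw [Function.iterate_succ_apply', hc2, ← heq]
      have hd2 := (chain_props ends j (x := x) (i2 + 1) (by omega)).2
      rw [hch2] at hd2
      by_cases hlt : i2 + 1 < dist ends x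
      · apply hs1
        refine ⟨f2, ?_, hn2, i2 + 1, hlt, hch2⟩
        intro u hu
        have hv1c : v1 ∈ component ends v2 := heq ▸ parent_mem_comp ends j hP2
        rw [component_eq_of_mem ends hv1c]
        exact hw2 u hu
      · have hd0 : dist ends v1 = 0 := by omega
        exact hP1 ((dist_eq_zero_iff ends).1 hd0)
    · -- neither shifted
      exact heq
  · -- e1 parent, e2 not
    obtain ⟨v1, hP1, he1⟩ := hex1
    exfalso
    rw [← he1] at heq
    rw [headF_pedge ends j hP1, headF_np ends j hex2] at heq
    have hw2 : ∀ u ∈ ends e2, u ∈ component ends (xe ends e2) :=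
      edge_within_comp ends (xe_mem ends e2)
    split_ifs at heq with hs1
    · -- parentT v1 = xe e2
      obtain ⟨f1, hw1, hn1, i1, hi1, hc1, hcc1⟩ := shift_comp_eq ends j hs1
      set x := xe ends f1 with hx
      have hch1 : (parentT ends j)^[i1 + 1] x = xe ends e2 := by
        rw [Function.iterate_succ_apply', hc1, heq]
      have hmem1 := (chain_props ends j (x := x) (i1 + 1) (by omega)).1
      rw [hch1] at hmem1
      have hcompe2 : component ends (xe ends e2) = component ends v1 := by
        rw [component_eq_of_mem ends hmem1, hcc1]
      have hf : e2 = f1 := by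
        refine npedge_unique ends j (hpf v1) ?_ ?_ hex2 hn1
        · refine Finset.mem_filter.2 ⟨Finset.mem_univ _, ?_⟩
          intro u hu
          rw [← hcompe2]
          exact hw2 u hu
        · exact Finset.mem_filter.2 ⟨Finset.mem_univ _, hw1⟩
      have hd1 := (chain_props ends j (x := x) (i1 + 1) (by omega)).2
      rw [hch1, hf, ← hx] at hd1
      omega
    · -- v1 = xe e2
      by_cases hd : dist ends (xe ends e2) = 0
      · have h0 := (dist_eq_zero_iff ends).1 hd
        rw [← heq] at h0
        exact hP1 h0
      · apply hs1
        refine ⟨e2, ?_, hex2, 0, by omega, heq.symm⟩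
        intro u hu
        rw [heq]
        exact hw2 u hu
  · -- e2 parent, e1 not : symmetric
    obtain ⟨v2, hP2, he2⟩ := hex2
    exfalso
    rw [← he2] at heq
    rw [headF_pedge ends j hP2, headF_np ends j hex1] at heq
    have hw1 : ∀ u ∈ ends e1, u ∈ component ends (xe ends e1) :=
      edge_within_comp ends (xe_mem ends e1)
    split_ifs at heq with hs2
    · obtain ⟨f2, hw2, hn2, i2, hi2, hc2, hcc2⟩ := shift_comp_eq ends j hs2
      set x := xe ends f2 with hx
      have hch2 : (parentT ends j)^[i2 + 1] x = xe ends e1 := by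
        rw [Function.iterate_succ_apply', hc2, ← heq]
      have hmem2 := (chain_props ends j (x := x) (i2 + 1) (by omega)).1
      rw [hch2] at hmem2
      have hcompe1 : component ends (xe ends e1) = component ends v2 := by
        rw [component_eq_of_mem ends hmem2, hcc2]
      have hf : e1 = f2 := by
        refine npedge_unique ends j (hpf v2) ?_ ?_ hex1 hn2
        · refine Finset.mem_filter.2 ⟨Finset.mem_univ _, ?_⟩
          intro u hu
          rw [← hcompe1]
          exact hw1 u hu
        · exact Finset.mem_filter.2 ⟨Finset.mem_univ _, hw2⟩
      have hd2 := (chain_props ends j (x := x) (i2 + 1) (by omega)).2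
      rw [hch2, hf, ← hx] at hd2
      omega
    · by_cases hd : dist ends (xe ends e1) = 0
      · have h0 := (dist_eq_zero_iff ends).1 hd
        rw [heq] at h0
        exact hP2 h0
      · apply hs2
        refine ⟨e1, ?_, hex1, 0, by omega, heq⟩
        intro u hu
        rw [← heq]
        exact hw1 u hu
  · -- both non-parent
    rw [headF_np ends j hex1, headF_np ends j hex2] at heq
    refine npedge_unique ends j (hpf (xe ends e1)) ?_ ?_ hex1 hex2
    · exact Finset.mem_filter.2 ⟨Finset.mem_univ _,
        edge_within_comp ends (xe_mem ends e1)⟩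
    · refine Finset.mem_filter.2 ⟨Finset.mem_univ _, ?_⟩
      intro u hu
      rw [show component ends (xe ends e1) = component ends (xe ends e2) by
        rw [heq]]
      exact edge_within_comp ends (xe_mem ends e2) u hu

lemma headF_cover (hpf : IsPseudoforest ends) {z : V} (hz : 2 ≤ degree ends z) :
    ∃ e, headF ends j e = z := by
  by_cases hPz : root ends z ≠ z
  · by_cases hs : shiftP ends j z
    · obtain ⟨e', hw', hn', i, hi, hc, hcc⟩ := shift_comp_eq ends j hs
      rcases Nat.eq_zero_or_pos i with rfl | hipos
      · refine ⟨e', ?_⟩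
        rw [headF_np ends j hn']
        simpa using hc
      · have hww := chain_props ends j (x := xe ends e') (i - 1) (by omega)
        obtain ⟨hwm, hwd⟩ := hww
        have hPw : root ends ((parentT ends j)^[i - 1] (xe ends e')) ≠
            (parentT ends j)^[i - 1] (xe ends e') := by
          intro h0
          have h00 := (dist_eq_zero_iff ends).2 h0
          omega
        have hsw : shiftP ends j ((parentT ends j)^[i - 1] (xe ends e')) := by
          refine ⟨e', ?_, hn', i - 1, by omega, rfl⟩
          intro u hu
          have hcw : component ends ((parentT ends j)^[i - 1] (xe ends e'))
              = component ends z := by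
            rw [component_eq_of_mem ends hwm, hcc]
          rw [hcw]
          exact hw' u hu
        refine ⟨pedge ends j ((parentT ends j)^[i - 1] (xe ends e')), ?_⟩
        rw [headF_pedge ends j hPw, if_pos hsw]
        calc parentT ends j ((parentT ends j)^[i - 1] (xe ends e'))
            = (parentT ends j)^[i - 1 + 1] (xe ends e') :=
              (Function.iterate_succ_apply' _ _ _).symm
          _ = z := by rw [show i - 1 + 1 = i by omega, hc]
    · refine ⟨pedge ends j z, ?_⟩
      rw [headF_pedge ends j hPz, if_neg hs]
  · push_neg at hPz
    by_cases hall : ∀ e ∈ Finset.univ.filter (fun e => ∀ u ∈ ends e, u ∈ component ends z),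
        ∃ v, root ends v ≠ v ∧ pedge ends j v = e
    · exfalso
      have h1 := root_low_degree ends j hall
      rw [hPz] at h1
      rw [degree_eq_degreeIn ends z] at hz
      omega
    · push_neg at hall
      obtain ⟨e', he'mem, hn0⟩ := hall
      have hn' : ¬∃ w, root ends w ≠ w ∧ pedge ends j w = e' :=
        fun ⟨w, hw1, hw2⟩ => hn0 w hw1 hw2
      have hw' : ∀ u ∈ ends e', u ∈ component ends z := (Finset.mem_filter.1 he'mem).2
      have hxz : xe ends e' ∈ component ends z := hw' _ (xe_mem ends e')
      have hrx : root ends (xe ends e') = z := by rw [root_eq_of_mem ends hxz, hPz]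
      rcases Nat.eq_zero_or_pos (dist ends (xe ends e')) with hd0 | hdpos
      · refine ⟨e', ?_⟩
        rw [headF_np ends j hn']
        have h00 := (dist_eq_zero_iff ends).1 hd0
        rw [hrx] at h00
        exact h00.symm
      · have hww := chain_props ends j (x := xe ends e') (dist ends (xe ends e') - 1)
          (by omega)
        obtain ⟨hwm, hwd⟩ := hww
        have hPw : root ends ((parentT ends j)^[dist ends (xe ends e') - 1] (xe ends e')) ≠
            (parentT ends j)^[dist ends (xe ends e') - 1] (xe ends e') := by
          intro h0
          have h00 := (dist_eq_zero_iff ends).2 h0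
          omega
        have hsw : shiftP ends j
            ((parentT ends j)^[dist ends (xe ends e') - 1] (xe ends e')) := by
          refine ⟨e', ?_, hn', dist ends (xe ends e') - 1, by omega, rfl⟩
          intro u hu
          have hcw : component ends
              ((parentT ends j)^[dist ends (xe ends e') - 1] (xe ends e'))
              = component ends z := by
            rw [component_eq_of_mem ends hwm, component_eq_of_mem ends hxz]
          rw [hcw]
          exact hw' u hu
        refine ⟨pedge ends j
          ((parentT ends j)^[dist ends (xe ends e') - 1] (xe ends e')), ?_⟩
        rw [headF_pedge ends j hPw, if_pos hsw]
        have hck := chain_props ends j (x := xe ends e') (dist ends (xe ends e'))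
          (by omega)
        obtain ⟨hcm, hcd⟩ := hck
        have hd0 : dist ends ((parentT ends j)^[dist ends (xe ends e')] (xe ends e')) = 0 := by
          omega
        have hr0 := (dist_eq_zero_iff ends).1 hd0
        rw [root_eq_of_mem ends hcm, hrx] at hr0
        calc parentT ends j
              ((parentT ends j)^[dist ends (xe ends e') - 1] (xe ends e'))
            = (parentT ends j)^[dist ends (xe ends e') - 1 + 1] (xe ends e') :=
              (Function.iterate_succ_apply' _ _ _).symm
          _ = z := by
              rw [show dist ends (xe ends e') - 1 + 1 = dist ends (xe ends e') by omega]
              exact hr0.symm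

lemma exists_head (hpf : IsPseudoforest ends) :
    ∃ head : E → V, Function.Injective head ∧ (∀ e, head e ∈ ends e) ∧
      ∀ v, 2 ≤ degree ends v → ∃ e, head e = v := by
  cases isEmpty_or_nonempty E with
  | inl hE =>
    refine ⟨fun e => hE.elim e, fun e => hE.elim e, fun e => hE.elim e, ?_⟩
    intro v hv
    exfalso
    have : degree ends v = 0 := by
      unfold degree
      rw [Finset.univ_eq_empty, Finset.sum_empty]
    omega
  | inr hNE =>
    obtain ⟨j⟩ := hNE
    exact ⟨headF ends j, headF_inj ends j hpf, headF_mem ends j,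
      fun v hv => headF_cover ends j hpf hv⟩

lemma degree_eq_out_in (D : E → V × V) (hor : IsOrientation ends D) (v : V) :
    degree ends v = outDeg D v + inDeg D v := by
  unfold degree outDeg inDeg
  rw [Finset.card_filter, Finset.card_filter, ← Finset.sum_add_distrib]
  refine Finset.sum_congr rfl ?_
  intro e _
  rw [← hor e]
  exact mult_mk v (D e).1 (D e).2

end Obs31

/-- Observation 3.1: for `f` with `f(v) ≥ 2` everywhere, `G` is a
degree-`f` pseudoforest iff `G` is `(1, f-1)`-orientable. -/
theorem degF_pseudoforest_iff_orientable {V E : Type} [Fintype V] [Fintype E] [DecidableEq V]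
    (ends : E → Sym2 V) (f : V → ℕ) (hf : ∀ v, 2 ≤ f v) :
    (IsPseudoforest ends ∧ ∀ v, degree ends v ≤ f v) ↔
      GHOrientable ends (fun _ => 1) (fun v => ((f v - 1 : ℕ) : ℕ∞)) := by
  constructor
  · rintro ⟨hpf, hdeg⟩
    obtain ⟨head, hinj, hmem, hcov⟩ := exists_head ends hpf
    refine ⟨fun e => (Sym2.Mem.other' (hmem e), head e), ?_, ?_, ?_⟩
    · intro e
      show Sym2.mk (Sym2.Mem.other' (hmem e)) (head e) = ends e
      rw [Sym2.eq_swap]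
      exact Sym2.other_spec' (hmem e)
    · intro v
      have h1 : inDeg (fun e => (Sym2.Mem.other' (hmem e), head e)) v ≤ 1 := by
        unfold inDeg
        rw [Finset.card_le_one]
        intro a ha b hb
        rw [Finset.mem_filter] at ha hb
        exact hinj (ha.2.trans hb.2.symm)
      show ((inDeg (fun e => (Sym2.Mem.other' (hmem e), head e)) v : ℕ) : ℕ∞) ≤ 1
      exact_mod_cast h1
    · intro v
      have hor : IsOrientation ends (fun e => (Sym2.Mem.other' (hmem e), head e)) := by
        intro e
        show Sym2.mk (Sym2.Mem.other' (hmem e)) (head e) = ends e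
        rw [Sym2.eq_swap]
        exact Sym2.other_spec' (hmem e)
      have hsplit := degree_eq_out_in ends _ hor v
      have hout : outDeg (fun e => (Sym2.Mem.other' (hmem e), head e)) v ≤ f v - 1 := by
        by_cases h2 : 2 ≤ degree ends v
        · obtain ⟨e, he⟩ := hcov v h2
          have hin1 : 0 < inDeg (fun e => (Sym2.Mem.other' (hmem e), head e)) v := by
            unfold inDeg
            exact Finset.card_pos.2 ⟨e, Finset.mem_filter.2 ⟨Finset.mem_univ _, he⟩⟩
          have hfv := hdeg v
          omega
        · have hf2 := hf v
          omega
      show ((outDeg (fun e => (Sym2.Mem.other' (hmem e), head e)) v : ℕ) : ℕ∞)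
        ≤ ((f v - 1 : ℕ) : ℕ∞)
      exact_mod_cast hout
  · rintro ⟨D, hor, hin, hout⟩
    have hinN : ∀ v, inDeg D v ≤ 1 := fun v => by
      exact_mod_cast (by exact hin v : ((inDeg D v : ℕ) : ℕ∞) ≤ 1)
    have houtN : ∀ v, outDeg D v ≤ f v - 1 := fun v => by
      exact_mod_cast (by exact hout v : ((outDeg D v : ℕ) : ℕ∞) ≤ ((f v - 1 : ℕ) : ℕ∞))
    constructor
    · intro v
      unfold edgesWithin
      refine Finset.card_le_card_of_injOn (fun e => (D e).2) ?_ ?_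
      · intro e he
        rw [Finset.mem_coe, Finset.mem_filter] at he
        apply he.2
        rw [← hor e]
        exact Sym2.mem_iff.2 (Or.inr rfl)
      · intro e1 _ e2 _ heq
        by_contra hne
        have hsub : ({e1, e2} : Finset E) ⊆
            Finset.univ.filter (fun e => (D e).2 = (D e2).2) := by
          intro e he
          rw [Finset.mem_insert, Finset.mem_singleton] at he
          rcases he with rfl | rfl
          · exact Finset.mem_filter.2 ⟨Finset.mem_univ _, heq⟩
          · exact Finset.mem_filter.2 ⟨Finset.mem_univ _, rfl⟩
        have hc := Finset.card_le_card hsub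
        rw [Finset.card_insert_of_notMem (by simpa using hne),
          Finset.card_singleton] at hc
        have hi2 := hinN ((D e2).2)
        unfold inDeg at hi2
        omega
    · intro v
      have hsplit := degree_eq_out_in ends D hor v
      have h1 := hinN v
      have h2 := houtN v
      have h3 := hf v
      omega

end MG
end
end
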